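/- The function u(x,t) = 2νπ e^{-π²ν(t-5)} sin(πx) / (2 + e^{-π²ν(t-5)} cos(πx)) satisfies the viscous Burgers equation ∂u/∂t + u ∂u/∂x = ν ∂²u/∂x² for all x ∈ ℝ and t ∈ ℝ, for any ν > 0. -/

import Mathlib

open Real Filter

section helpers
lemma abs_div_tendsto_atTop {N D : ℝ → ℝ} {l : Filter ℝ} {a : ℝ}
    (hN : Tendsto N l (nhds a)) (ha : a ≠ 0) (hD : Tendsto D l (nhds 0))
    (hD' : ∀ᶠ y in l, D y ≠ 0) :
    Tendsto (fun y => |N y / D y|) l atTop := by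
  have h1 : Tendsto (fun y => |N y|) l (nhds |a|) := hN.abs
  have h2 : Tendsto (fun y => |D y|) l (nhdsWithin 0 (Set.Ioi 0)) := by
    apply tendsto_nhdsWithin_of_tendsto_nhds_of_eventually_within
    · simpa using hD.abs
    · filter_upwards [hD'] with y hy
      exact abs_pos.mpr hy
  have h3 : Tendsto (fun y => |D y|)⁻¹ l atTop := h2.inv_tendsto_nhdsGT_zero
  have := Filter.Tendsto.pos_mul_atTop (abs_pos.mpr ha) h1 h3
  exact this.congr fun y => by rw [Pi.inv_apply, ← div_eq_mul_inv, ← abs_div]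

lemma not_diff_of_blowup {f : ℝ → ℝ} {a : ℝ} (hf0 : f a = 0)
    (h : Tendsto (fun y => |f y|) (nhdsWithin a {a}ᶜ) atTop) :
    ¬ DifferentiableAt ℝ f a := by
  intro hd
  have hc : Tendsto f (nhdsWithin a {a}ᶜ) (nhds 0) := by
    have := hd.continuousAt.tendsto
    rw [hf0] at this
    exact this.mono_left nhdsWithin_le_nhds
  have h1 : ∀ᶠ y in nhdsWithin a {a}ᶜ, |f y| < 1 :=
    hc.abs.eventually_lt_const (by norm_num)
  have h2 : ∀ᶠ y in nhdsWithin a {a}ᶜ, (1:ℝ) ≤ |f y| := h.eventually_ge_atTop 1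
  have : ∀ᶠ y in nhdsWithin a {a}ᶜ, False := by
    filter_upwards [h1, h2] with y hy1 hy2
    linarith
  exact this.exists.elim (fun _ h => h)

lemma hderiv_sin (y : ℝ) : HasDerivAt (fun x' => Real.sin (π * x')) (Real.cos (π * y) * π) y := by
  simpa [Function.comp_def] using (show HasDerivAt _ _ y from (Real.hasDerivAt_sin (π * y)).comp y ((hasDerivAt_id y).const_mul π))

lemma hderiv_cos (y : ℝ) : HasDerivAt (fun x' => Real.cos (π * x')) (-Real.sin (π * y) * π) y := by
  simpa [Function.comp_def] using (show HasDerivAt _ _ y from (Real.hasDerivAt_cos (π * y)).comp y ((hasDerivAt_id y).const_mul π))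

lemma hderiv_x (ν E : ℝ) (y : ℝ) (hD : 2 + E * Real.cos (π * y) ≠ 0) :
    HasDerivAt (fun x' => 2 * ν * π * E * Real.sin (π * x') / (2 + E * Real.cos (π * x')))
      (2 * ν * π ^ 2 * E * (2 * Real.cos (π * y) + E) / (2 + E * Real.cos (π * y)) ^ 2) y := by
  have hn : HasDerivAt (fun x' => 2 * ν * π * E * Real.sin (π * x'))
      (2 * ν * π * E * (Real.cos (π * y) * π)) y := (hderiv_sin y).const_mul _
  have hd : HasDerivAt (fun x' => 2 + E * Real.cos (π * x'))
      (E * (-Real.sin (π * y) * π)) y := ((hderiv_cos y).const_mul E).const_add 2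
  have := hn.div hd hD
  refine this.congr_deriv (Eq.symm ?_)
  have key := Real.sin_sq_add_cos_sq (π * y)
  field_simp
  linear_combination -ν * E ^ 2 * key

lemma hderiv_xx (ν E : ℝ) (y : ℝ) (hD : 2 + E * Real.cos (π * y) ≠ 0) :
    HasDerivAt (fun x' => 2 * ν * π ^ 2 * E * (2 * Real.cos (π * x') + E) / (2 + E * Real.cos (π * x')) ^ 2)
      (4 * ν * π ^ 3 * E * Real.sin (π * y) * (E * Real.cos (π * y) - 2 + E ^ 2)
        / (2 + E * Real.cos (π * y)) ^ 3) y := by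
  have hn : HasDerivAt (fun x' => 2 * ν * π ^ 2 * E * (2 * Real.cos (π * x') + E))
      (2 * ν * π ^ 2 * E * (2 * (-Real.sin (π * y) * π))) y :=
    (((hderiv_cos y).const_mul 2).add_const E).const_mul _
  have hd : HasDerivAt (fun x' => (2 + E * Real.cos (π * x')) ^ 2)
      (2 * (2 + E * Real.cos (π * y)) ^ 1 * (E * (-Real.sin (π * y) * π))) y :=
    (((hderiv_cos y).const_mul E).const_add 2).pow 2
  have := hn.div hd (pow_ne_zero 2 hD)
  refine this.congr_deriv (Eq.symm ?_)
  field_simp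
  ring

lemma hderiv_E (ν t : ℝ) : HasDerivAt (fun t' => Real.exp (-π ^ 2 * ν * (t' - 5)))
    (Real.exp (-π ^ 2 * ν * (t - 5)) * (-π ^ 2 * ν)) t := by
  have h : HasDerivAt (fun t' : ℝ => -π ^ 2 * ν * (t' - 5)) (-π ^ 2 * ν) t := by
    have := ((hasDerivAt_id t).sub_const 5).const_mul (-π ^ 2 * ν)
    simpa using this
  simpa [mul_comm] using h.exp

lemma hderiv_t (ν x t : ℝ)
    (hD : 2 + Real.exp (-π ^ 2 * ν * (t - 5)) * Real.cos (π * x) ≠ 0) :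
    HasDerivAt (fun t' => 2 * ν * π * Real.exp (-π ^ 2 * ν * (t' - 5)) * Real.sin (π * x) /
        (2 + Real.exp (-π ^ 2 * ν * (t' - 5)) * Real.cos (π * x)))
      (-4 * ν ^ 2 * π ^ 3 * Real.exp (-π ^ 2 * ν * (t - 5)) * Real.sin (π * x) /
        (2 + Real.exp (-π ^ 2 * ν * (t - 5)) * Real.cos (π * x)) ^ 2) t := by
  have hE := hderiv_E ν t
  have hn : HasDerivAt (fun t' => 2 * ν * π * Real.exp (-π ^ 2 * ν * (t' - 5)) * Real.sin (π * x))
      (2 * ν * π * (Real.exp (-π ^ 2 * ν * (t - 5)) * (-π ^ 2 * ν)) * Real.sin (π * x)) t :=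
    (hE.const_mul (2 * ν * π)).mul_const _
  have hd : HasDerivAt (fun t' => 2 + Real.exp (-π ^ 2 * ν * (t' - 5)) * Real.cos (π * x))
      (Real.exp (-π ^ 2 * ν * (t - 5)) * (-π ^ 2 * ν) * Real.cos (π * x)) t :=
    (hE.mul_const _).const_add 2
  have := hn.div hd hD
  refine this.congr_deriv (Eq.symm ?_)
  field_simp
  ring
end helpers

theorem burgers_analytical_solution (ν : ℝ) (hν : 0 < ν)
    (u : ℝ → ℝ → ℝ)
    (hu : ∀ x t : ℝ, u x t =
      (2 * ν * π * Real.exp (-π ^ 2 * ν * (t - 5)) * Real.sin (π * x)) /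
        (2 + Real.exp (-π ^ 2 * ν * (t - 5)) * Real.cos (π * x))) :
    ∀ x t : ℝ,
      deriv (fun t' => u x t') t + u x t * deriv (fun x' => u x' t) x =
        ν * deriv (deriv (fun x' => u x' t)) x := by
  intro x t
  have hπ : 0 < π := Real.pi_pos
  have hE : 0 < Real.exp (-π ^ 2 * ν * (t - 5)) := Real.exp_pos _
  set E := Real.exp (-π ^ 2 * ν * (t - 5)) with hEdef
  have hfx : (fun x' => u x' t) =
      (fun x' => 2 * ν * π * E * Real.sin (π * x') / (2 + E * Real.cos (π * x'))) := by
    funext x'; rw [hu]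
  have hft : (fun t' => u x t') =
      (fun t' => 2 * ν * π * Real.exp (-π ^ 2 * ν * (t' - 5)) * Real.sin (π * x) /
        (2 + Real.exp (-π ^ 2 * ν * (t' - 5)) * Real.cos (π * x))) := by
    funext t'; rw [hu]
  by_cases hD : 2 + E * Real.cos (π * x) = 0
  · -- singular case
    have hπν : π ^ 2 * ν ≠ 0 := by positivity
    have hcne : Real.cos (π * x) ≠ 0 := by
      intro h; rw [h] at hD; norm_num at hD
    have hcE : Continuous fun t' : ℝ => Real.exp (-π ^ 2 * ν * (t' - 5)) :=
      Real.continuous_exp.comp (continuous_const.mul (continuous_id.sub continuous_const))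
    have hccos : Continuous fun y : ℝ => Real.cos (π * y) := by fun_prop
    have hcsin : Continuous fun y : ℝ => Real.sin (π * y) := by fun_prop
    have hu0 : u x t = 0 := by rw [hu, ← hEdef, hD, div_zero]
    -- the time derivative vanishes
    have hT : deriv (fun t' => u x t') t = 0 := by
      by_cases hs : Real.sin (π * x) = 0
      · rw [hft]; simp [hs]
      · apply deriv_zero_of_not_differentiableAt
        rw [hft]
        apply not_diff_of_blowup
        · show 2 * ν * π * Real.exp (-π ^ 2 * ν * (t - 5)) * Real.sin (π * x) /
            (2 + Real.exp (-π ^ 2 * ν * (t - 5)) * Real.cos (π * x)) = 0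
          rw [← hEdef, hD, div_zero]
        · apply abs_div_tendsto_atTop (a := 2 * ν * π * E * Real.sin (π * x))
          · have h2 : Tendsto (fun t' => 2 * ν * π * Real.exp (-π ^ 2 * ν * (t' - 5)) *
                Real.sin (π * x)) (nhdsWithin t {t}ᶜ)
                (nhds (2 * ν * π * Real.exp (-π ^ 2 * ν * (t - 5)) * Real.sin (π * x))) :=
              (((continuous_const.mul hcE).mul continuous_const).continuousWithinAt)
            rw [← hEdef] at h2
            exact h2
          · exact mul_ne_zero (by positivity) hs
          · have h2 : Tendsto (fun t' => 2 + Real.exp (-π ^ 2 * ν * (t' - 5)) *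
                Real.cos (π * x)) (nhdsWithin t {t}ᶜ)
                (nhds (2 + Real.exp (-π ^ 2 * ν * (t - 5)) * Real.cos (π * x))) :=
              ((continuous_const.add (hcE.mul continuous_const)).continuousWithinAt)
            rw [← hEdef, hD] at h2
            exact h2
          · refine Filter.eventually_of_mem self_mem_nhdsWithin fun t' ht' => ?_
            intro hzero
            apply ht'
            have h5 : Real.exp (-π ^ 2 * ν * (t' - 5)) * Real.cos (π * x) =
                E * Real.cos (π * x) := by linarith
            have h6 : Real.exp (-π ^ 2 * ν * (t' - 5)) = E := mul_right_cancel₀ hcne h5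
            rw [hEdef, Real.exp_eq_exp] at h6
            have h7 : t' - 5 = t - 5 := by
              have := mul_left_cancel₀ (by simpa using hπν) h6
              linarith [this]
            simp [show t' = t by linarith]
    -- now the x-derivatives
    by_cases hs : Real.sin (π * x) = 0
    · -- E = 2, cos = -1 : tangent case
      have hsq := Real.sin_sq_add_cos_sq (π * x)
      have hc2 : Real.cos (π * x) ^ 2 = 1 := by nlinarith
      have hcos : Real.cos (π * x) = -1 := by
        have h4 : (Real.cos (π * x) - 1) * (Real.cos (π * x) + 1) = 0 := by nlinarith
        rcases mul_eq_zero.mp h4 with h | h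
        · exfalso
          have : Real.cos (π * x) = 1 := by linarith
          rw [this] at hD; nlinarith
        · linarith
      have hE2 : E = 2 := by rw [hcos] at hD; linarith
      have htan : (fun x' => u x' t) = fun x' => 2 * ν * π * Real.tan (π * x' / 2) := by
        funext y
        rw [hu, ← hEdef, hE2]
        have h1 : Real.sin (π * y) = 2 * Real.sin (π * y / 2) * Real.cos (π * y / 2) := by
          rw [show π * y = 2 * (π * y / 2) by ring, Real.sin_two_mul]
          ring_nf
        have h2 : Real.cos (π * y) = 2 * Real.cos (π * y / 2) ^ 2 - 1 := by
          rw [show π * y = 2 * (π * y / 2) by ring, Real.cos_two_mul]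
          ring_nf
        rw [h1, h2, Real.tan_eq_sin_div_cos]
        by_cases hcy : Real.cos (π * y / 2) = 0
        · simp [hcy]
        · have hden : (2:ℝ) + 2 * (2 * Real.cos (π * y / 2) ^ 2 - 1) =
              4 * Real.cos (π * y / 2) ^ 2 := by ring
          have h4c : (4:ℝ) * Real.cos (π * y / 2) ^ 2 ≠ 0 :=
            mul_ne_zero four_ne_zero (pow_ne_zero 2 hcy)
          rw [hden, ← mul_div_assoc, div_eq_div_iff h4c hcy]
          ring
      have hhalf : Real.cos (π * x / 2) = 0 := by
        have h2 : Real.cos (π * x) = 2 * Real.cos (π * x / 2) ^ 2 - 1 := by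
          rw [show π * x = 2 * (π * x / 2) by ring, Real.cos_two_mul]
          ring_nf
        have h3 : Real.cos (π * x / 2) ^ 2 = 0 := by rw [hcos] at h2; linarith
        exact pow_eq_zero_iff (by norm_num) |>.mp h3
      have hsinhalf : Real.sin (π * x / 2) ≠ 0 := by
        intro h
        have h7 := Real.sin_sq_add_cos_sq (π * x / 2)
        rw [h, hhalf] at h7; norm_num at h7
      have hinner : ∀ y : ℝ, HasDerivAt (fun z : ℝ => π * z / 2) (π / 2) y := by
        intro y
        simpa using ((hasDerivAt_id y).const_mul π).div_const 2
      have hndiff_f : ¬ DifferentiableAt ℝ (fun x' => u x' t) x := by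
        intro hdf
        rw [htan] at hdf
        have hg : DifferentiableAt ℝ (fun x' => Real.tan (π * x' / 2)) x := by
          have h4 : (fun x' => Real.tan (π * x' / 2)) =
              fun x' => 2 * ν * π * Real.tan (π * x' / 2) * (1 / (2 * ν * π)) := by
            funext y
            field_simp
          rw [h4]
          exact hdf.mul_const _
        have hcomp : (fun y : ℝ => Real.tan (π * (2 / π * y) / 2)) = Real.tan := by
          funext y
          congr 1
          field_simp
        have h5 : DifferentiableAt ℝ ((fun x' => Real.tan (π * x' / 2)) ∘
            (fun y : ℝ => 2 / π * y)) (π * x / 2) := by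
          apply DifferentiableAt.comp
          · have h6 : 2 / π * (π * x / 2) = x := by
              field_simp
            rw [h6]
            exact hg
          · exact differentiableAt_id.const_mul _
        have h5' : DifferentiableAt ℝ (fun y : ℝ => Real.tan (π * (2 / π * y) / 2))
            (π * x / 2) := h5
        rw [hcomp] at h5'
        rename' h5' => h5
        exact (Real.continuousAt_tan.mp h5.continuousAt) hhalf
      have hdf0 : deriv (fun x' => u x' t) x = 0 :=
        deriv_zero_of_not_differentiableAt hndiff_f
      have hev2 : ∀ᶠ y in nhdsWithin x {x}ᶜ, Real.cos (π * y / 2) ≠ 0 := by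
        have hD2 : HasDerivAt (fun y => Real.cos (π * y / 2))
            (-Real.sin (π * x / 2) * (π / 2)) x := by
          simpa [Function.comp_def] using (show HasDerivAt _ _ x from (Real.hasDerivAt_cos (π * x / 2)).comp x (hinner x))
        have h6 := hD2.eventually_ne (c := Real.cos (π * x / 2))
          (mul_ne_zero (neg_ne_zero.mpr hsinhalf) (by positivity))
        filter_upwards [h6] with y hy
        simpa [hhalf] using hy
      have hgev : ∀ᶠ y in nhdsWithin x {x}ᶜ, deriv (fun x' => u x' t) y =
          ν * π ^ 2 / Real.cos (π * y / 2) ^ 2 := by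
        filter_upwards [hev2] with y hy
        rw [htan]
        have hdy : HasDerivAt (fun x' => 2 * ν * π * Real.tan (π * x' / 2))
            (2 * ν * π * (1 / Real.cos (π * y / 2) ^ 2 * (π / 2))) y :=
          ((Real.hasDerivAt_tan hy).comp y (hinner y)).const_mul _
        rw [hdy.deriv]
        field_simp
      have hblow_g : Tendsto (fun y => |deriv (fun x' => u x' t) y|)
          (nhdsWithin x {x}ᶜ) atTop := by
        have h9 : Tendsto (fun y => |ν * π ^ 2 / Real.cos (π * y / 2) ^ 2|)
            (nhdsWithin x {x}ᶜ) atTop := by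
          apply abs_div_tendsto_atTop (a := ν * π ^ 2)
          · exact tendsto_const_nhds
          · exact ne_of_gt (by positivity)
          · have hcc : Continuous fun y : ℝ => Real.cos (π * y / 2) ^ 2 := by fun_prop
            have h10 : Tendsto (fun y => Real.cos (π * y / 2) ^ 2) (nhdsWithin x {x}ᶜ)
                (nhds (Real.cos (π * x / 2) ^ 2)) := hcc.continuousWithinAt
            rw [hhalf] at h10
            simpa using h10
          · filter_upwards [hev2] with y hy
            exact pow_ne_zero 2 hy
        apply h9.congr'
        filter_upwards [hgev] with y hy
        rw [hy]
      have hgndiff : ¬ DifferentiableAt ℝ (deriv fun x' => u x' t) x :=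
        not_diff_of_blowup hdf0 hblow_g
      have hxx0 : deriv (deriv fun x' => u x' t) x = 0 :=
        deriv_zero_of_not_differentiableAt hgndiff
      rw [hT, hdf0, hxx0, hu0]
      ring
    · -- sin ≠ 0 : generic blowup case
      have hDx : HasDerivAt (fun y => 2 + E * Real.cos (π * y)) (E * (-Real.sin (π * x) * π)) x :=
        ((hderiv_cos x).const_mul E).const_add 2
      have hd'ne : E * (-Real.sin (π * x) * π) ≠ 0 :=
        mul_ne_zero hE.ne' (mul_ne_zero (neg_ne_zero.mpr hs) hπ.ne')
      have hevne : ∀ᶠ y in nhdsWithin x {x}ᶜ, 2 + E * Real.cos (π * y) ≠ 0 := by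
        have h8 := hDx.eventually_ne (c := 2 + E * Real.cos (π * x)) hd'ne
        filter_upwards [h8] with y hy
        rw [hD] at hy
        exact hy
      have hblow_f : Tendsto (fun y => |u y t|) (nhdsWithin x {x}ᶜ) atTop := by
        have h9 : Tendsto (fun y => |2 * ν * π * E * Real.sin (π * y) /
            (2 + E * Real.cos (π * y))|) (nhdsWithin x {x}ᶜ) atTop := by
          apply abs_div_tendsto_atTop (a := 2 * ν * π * E * Real.sin (π * x))
          · have h2 : Tendsto (fun y => 2 * ν * π * E * Real.sin (π * y))
                (nhdsWithin x {x}ᶜ) (nhds (2 * ν * π * E * Real.sin (π * x))) :=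
              ((continuous_const.mul hcsin).continuousWithinAt)
            exact h2
          · exact mul_ne_zero (by positivity) hs
          · have h10 : Tendsto (fun y => 2 + E * Real.cos (π * y))
                (nhdsWithin x {x}ᶜ) (nhds (2 + E * Real.cos (π * x))) :=
              ((continuous_const.add (continuous_const.mul hccos)).continuousWithinAt)
            rw [hD] at h10
            exact h10
          · exact hevne
        exact h9.congr fun y => by rw [hu, ← hEdef]
      have hndiff_f : ¬ DifferentiableAt ℝ (fun x' => u x' t) x := by
        apply not_diff_of_blowup
        · show u x t = 0
          exact hu0
        · exact hblow_f
      have hdf0 : deriv (fun x' => u x' t) x = 0 :=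
        deriv_zero_of_not_differentiableAt hndiff_f
      have hEc : E * Real.cos (π * x) = -2 := by linarith
      have hEne2 : E ≠ 2 := by
        intro h
        rw [h] at hEc
        have : Real.cos (π * x) = -1 := by linarith
        have hsq := Real.sin_sq_add_cos_sq (π * x)
        rw [this] at hsq
        apply hs
        nlinarith
      have hkey : 2 * Real.cos (π * x) + E ≠ 0 := by
        intro h
        have h4 : (E - 2) * (E + 2) = 0 := by nlinarith
        rcases mul_eq_zero.mp h4 with h5 | h5
        · exact hEne2 (by linarith)
        · linarith
      have hgev : ∀ᶠ y in nhdsWithin x {x}ᶜ, deriv (fun x' => u x' t) y =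
          2 * ν * π ^ 2 * E * (2 * Real.cos (π * y) + E) / (2 + E * Real.cos (π * y)) ^ 2 := by
        filter_upwards [hevne] with y hy
        rw [hfx]
        exact (hderiv_x ν E y hy).deriv
      have hblow_g : Tendsto (fun y => |deriv (fun x' => u x' t) y|)
          (nhdsWithin x {x}ᶜ) atTop := by
        have h9 : Tendsto (fun y => |2 * ν * π ^ 2 * E * (2 * Real.cos (π * y) + E) /
            (2 + E * Real.cos (π * y)) ^ 2|) (nhdsWithin x {x}ᶜ) atTop := by
          apply abs_div_tendsto_atTop (a := 2 * ν * π ^ 2 * E * (2 * Real.cos (π * x) + E))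
          · have h10 : Tendsto (fun y => 2 * ν * π ^ 2 * E * (2 * Real.cos (π * y) + E))
                (nhdsWithin x {x}ᶜ)
                (nhds (2 * ν * π ^ 2 * E * (2 * Real.cos (π * x) + E))) :=
              ((continuous_const.mul ((continuous_const.mul hccos).add
                continuous_const)).continuousWithinAt)
            exact h10
          · exact mul_ne_zero (by positivity) hkey
          · have h10 : Tendsto (fun y => (2 + E * Real.cos (π * y)) ^ 2)
                (nhdsWithin x {x}ᶜ) (nhds ((2 + E * Real.cos (π * x)) ^ 2)) :=
              (((continuous_const.add (continuous_const.mul hccos)).pow 2).continuousWithinAt)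
            rw [hD] at h10
            simpa using h10
          · filter_upwards [hevne] with y hy
            exact pow_ne_zero 2 hy
        apply h9.congr'
        filter_upwards [hgev] with y hy
        rw [hy]
      have hgndiff : ¬ DifferentiableAt ℝ (deriv fun x' => u x' t) x := by
        apply not_diff_of_blowup
        · exact hdf0
        · exact hblow_g
      have hxx0 : deriv (deriv fun x' => u x' t) x = 0 :=
        deriv_zero_of_not_differentiableAt hgndiff
      rw [hT, hdf0, hxx0, hu0]
      ring
  · -- regular case
    have h1 : deriv (fun x' => u x' t) x =
        2 * ν * π ^ 2 * E * (2 * Real.cos (π * x) + E) / (2 + E * Real.cos (π * x)) ^ 2 := by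
      rw [hfx]; exact (hderiv_x ν E x hD).deriv
    have h2 : deriv (fun t' => u x t') t =
        -4 * ν ^ 2 * π ^ 3 * E * Real.sin (π * x) / (2 + E * Real.cos (π * x)) ^ 2 := by
      rw [hft]; exact (hderiv_t ν x t hD).deriv
    have hcont : Continuous fun x' : ℝ => 2 + E * Real.cos (π * x') := continuous_const.add (continuous_const.mul (Real.continuous_cos.comp (continuous_const.mul continuous_id)))
    have hne : ∀ᶠ y in nhds x, 2 + E * Real.cos (π * y) ≠ 0 :=
      hcont.continuousAt.eventually_ne hD
    have hev : deriv (fun x' => u x' t) =ᶠ[nhds x]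
        (fun x' => 2 * ν * π ^ 2 * E * (2 * Real.cos (π * x') + E) / (2 + E * Real.cos (π * x')) ^ 2) := by
      filter_upwards [hne] with y hy
      rw [hfx]
      exact (hderiv_x ν E y hy).deriv
    have h3 : deriv (deriv (fun x' => u x' t)) x =
        4 * ν * π ^ 3 * E * Real.sin (π * x) * (E * Real.cos (π * x) - 2 + E ^ 2)
          / (2 + E * Real.cos (π * x)) ^ 3 := by
      rw [hev.deriv_eq]
      exact (hderiv_xx ν E x hD).deriv
    have hu' : u x t = 2 * ν * π * E * Real.sin (π * x) / (2 + E * Real.cos (π * x)) := by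
      rw [hu]
    rw [h1, h2, h3, hu']
    clear_value E
    field_simp
    ring
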